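/- In a 2-dimensional real vector space V, if A, B ∈ sl(V) (traceless endomorphisms) are linearly independent and satisfy [A,B] = A, then A² = 0 and A ≠ 0. -/

import Mathlib

lemma sq_eq_zero_of_traces (M : Matrix (Fin 2) (Fin 2) ℝ)
    (h1 : M.trace = 0) (h2 : (M * M).trace = 0) : M * M = 0 := by
  rw [Matrix.trace_fin_two] at h1
  rw [Matrix.trace_fin_two, Matrix.mul_apply, Matrix.mul_apply, Fin.sum_univ_two,
    Fin.sum_univ_two] at h2
  ext i j
  fin_cases i <;> fin_cases j <;>
    simp only [Matrix.mul_apply, Fin.sum_univ_two, Matrix.zero_apply, Fin.isValue,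
      Fin.mk_zero, Fin.mk_one]
  · linear_combination (h2 + (M 0 0 - M 1 1) * h1) / 2
  · linear_combination M 0 1 * h1
  · linear_combination M 1 0 * h1
  · linear_combination (h2 - (M 0 0 - M 1 1) * h1) / 2

theorem stmt_2 (V : Type*) [AddCommGroup V] [Module ℝ V]
    (hdim : Module.finrank ℝ V = 2)
    (A B : Module.End ℝ V)
    (hA : LinearMap.trace ℝ V A = 0) (hB : LinearMap.trace ℝ V B = 0)
    (hind : LinearIndependent ℝ ![A, B])
    (hbr : A * B - B * A = A) :
    A * A = 0 ∧ A ≠ 0 := by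
  have hA0 : A ≠ 0 := by simpa using hind.ne_zero 0
  refine ⟨?_, hA0⟩
  have hfd : FiniteDimensional ℝ V := FiniteDimensional.of_finrank_pos (by omega)
  have htr2 : LinearMap.trace ℝ V (A * A) = 0 := by
    have h : A * A = A * (A * B) - (A * B) * A := by
      rw [show A * (A * B) - (A * B) * A = A * (A * B - B * A) by noncomm_ring, hbr]
    rw [h, map_sub, LinearMap.trace_mul_comm, sub_self]
  let b : Module.Basis (Fin 2) ℝ V := (Module.finBasis ℝ V).reindex (finCongr hdim)
  set M := LinearMap.toMatrix b b A with hM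
  have hMtr : M.trace = 0 := by
    rw [← LinearMap.trace_eq_matrix_trace ℝ b]; exact hA
  have hM2 : M * M = LinearMap.toMatrix b b (A * A) := by
    rw [LinearMap.toMatrix_mul]
  have hM2tr : (M * M).trace = 0 := by
    rw [hM2, ← LinearMap.trace_eq_matrix_trace ℝ b]; exact htr2
  have hMM0 : M * M = 0 := sq_eq_zero_of_traces M hMtr hM2tr
  have : LinearMap.toMatrix b b (A * A) = LinearMap.toMatrix b b 0 := by
    rw [← hM2, hMM0]; simp
  exact (LinearMap.toMatrix b b).injective this
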